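/- Let A be an associative unital ring, ι a finite set, and T a map from subsets of ι to A with T(∅) = 1; let T̄ be the associated antichronological products. Then for every nonempty Z ⊆ ι both identities hold: Σ_{X ⊔ Y = Z} (−1)^{|X|} T(X)·T̄(Y) = 0 and Σ_{X ⊔ Y = Z} (−1)^{|X|} T̄(X)·T(Y) = 0, where the sums run over all partitions of Z into disjoint (possibly empty) subsets X and Y. -/

import Mathlib

/-- Sum over all ordered partitions of `X` into `r ≥ 1` nonempty pairwise disjoint blocks
`X₁, …, X_r` of `(-1)^r * T X₁ * ⋯ * T X_r` (with value `1` for `X = ∅`), computed by peeling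
off the first block. -/
def opSum {A : Type*} [Ring A] {ι : Type*} [DecidableEq ι]
    (T : Finset ι → A) (X : Finset ι) : A :=
  if _hX : X = ∅ then 1
  else
    ∑ Y ∈ (X.powerset.filter (fun Y => Y ≠ ∅)).attach,
      (-1 : A) * T Y.1 * opSum T (X \ Y.1)
termination_by X.card
decreasing_by
  have hY := Y.2
  simp only [Finset.mem_filter, Finset.mem_powerset] at hY
  have h1 : Y.1.card ≤ X.card := Finset.card_le_card hY.1
  have h2 : 0 < Y.1.card := Finset.card_pos.mpr (Finset.nonempty_iff_ne_empty.mpr hY.2)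
  rw [Finset.card_sdiff_of_subset hY.1]
  omega

section Aux
variable {A : Type*} [Ring A] {ι : Type*} [DecidableEq ι]

lemma opSum_empty (T : Finset ι → A) : opSum T ∅ = 1 := by rw [opSum]; simp

lemma opSum_rec (T : Finset ι → A) (Z : Finset ι) (hZ : Z ≠ ∅) :
    opSum T Z = ∑ Y ∈ Z.powerset.filter (fun Y => Y ≠ ∅), (-1 : A) * T Y * opSum T (Z \ Y) := by
  rw [opSum, dif_neg hZ]
  exact Finset.sum_attach _ (fun Y => (-1 : A) * T Y * opSum T (Z \ Y))

lemma split_powerset (f : Finset ι → A) (Z : Finset ι) :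
    ∑ X ∈ Z.powerset, f X = f ∅ + ∑ X ∈ Z.powerset.filter (fun Y => Y ≠ ∅), f X := by
  rw [← Finset.sum_filter_add_sum_filter_not Z.powerset (fun Y => Y = ∅)]
  congr 1
  have h : Z.powerset.filter (fun Y => Y = ∅) = {∅} := by
    ext X
    simp only [Finset.mem_filter, Finset.mem_powerset, Finset.mem_singleton]
    exact ⟨fun h => h.2, fun h => ⟨h ▸ Finset.empty_subset Z, h⟩⟩
  rw [h, Finset.sum_singleton]

lemma firstId (T : Finset ι → A) (hT1 : T ∅ = 1) (Z : Finset ι) (hZ : Z ≠ ∅) :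
    ∑ X ∈ Z.powerset, T X * opSum T (Z \ X) = 0 := by
  rw [split_powerset (fun X => T X * opSum T (Z \ X))]
  simp only [hT1, Finset.sdiff_empty, one_mul]
  have h := opSum_rec T Z hZ
  have h2 : ∑ X ∈ Z.powerset.filter (fun Y => Y ≠ ∅), T X * opSum T (Z \ X)
      = - opSum T Z := by
    rw [h]
    rw [← Finset.sum_neg_distrib]
    exact Finset.sum_congr rfl (fun X _ => by noncomm_ring)
  rw [h2, add_neg_cancel]

lemma secondId (T : Finset ι → A) (hT1 : T ∅ = 1) :
    ∀ Z : Finset ι, Z ≠ ∅ → ∑ X ∈ Z.powerset, opSum T X * T (Z \ X) = 0 := by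
  intro Z
  induction Z using Finset.strongInduction with
  | _ Z ih =>
    intro hZ
    rw [split_powerset (fun X => opSum T X * T (Z \ X))]
    simp only [opSum_empty, Finset.sdiff_empty, one_mul]
    have key : ∑ X ∈ Z.powerset.filter (fun Y => Y ≠ ∅), opSum T X * T (Z \ X)
        = ∑ Y ∈ Z.powerset.filter (fun Y => Y ≠ ∅),
            (-1 : A) * T Y * ∑ W ∈ (Z \ Y).powerset, opSum T W * T ((Z \ Y) \ W) := by
      have step1 : ∑ X ∈ Z.powerset.filter (fun Y => Y ≠ ∅), opSum T X * T (Z \ X)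
          = ∑ X ∈ Z.powerset.filter (fun Y => Y ≠ ∅),
              ∑ Y ∈ X.powerset.filter (fun Y => Y ≠ ∅),
                ((-1 : A) * T Y * opSum T (X \ Y)) * T (Z \ X) := by
        refine Finset.sum_congr rfl (fun X hX => ?_)
        simp only [Finset.mem_filter, Finset.mem_powerset] at hX
        rw [opSum_rec T X hX.2, Finset.sum_mul]
      rw [step1]
      have step2 : ∀ Y ∈ Z.powerset.filter (fun Y => Y ≠ ∅),
          (-1 : A) * T Y * ∑ W ∈ (Z \ Y).powerset, opSum T W * T ((Z \ Y) \ W)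
          = ∑ W ∈ (Z \ Y).powerset, ((-1 : A) * T Y * opSum T W) * T ((Z \ Y) \ W) := by
        intro Y _
        rw [Finset.mul_sum]
        exact Finset.sum_congr rfl (fun W _ => by noncomm_ring)
      rw [Finset.sum_congr rfl step2]
      rw [Finset.sum_sigma' (Z.powerset.filter (fun Y => Y ≠ ∅))
            (fun X => X.powerset.filter (fun Y => Y ≠ ∅))
            (fun X Y => ((-1 : A) * T Y * opSum T (X \ Y)) * T (Z \ X)),
          Finset.sum_sigma' (Z.powerset.filter (fun Y => Y ≠ ∅))
            (fun Y => (Z \ Y).powerset)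
            (fun Y W => ((-1 : A) * T Y * opSum T W) * T ((Z \ Y) \ W))]
      refine Finset.sum_bij' (fun p _ => ⟨p.2, p.1 \ p.2⟩) (fun p _ => ⟨p.1 ∪ p.2, p.1⟩)
        ?_ ?_ ?_ ?_ ?_
      · rintro ⟨X, Y⟩ hp
        simp only [Finset.mem_sigma, Finset.mem_filter, Finset.mem_powerset] at hp ⊢
        exact ⟨⟨hp.2.1.trans hp.1.1, hp.2.2⟩, Finset.sdiff_subset_sdiff hp.1.1 le_rfl⟩
      · rintro ⟨Y, W⟩ hp
        simp only [Finset.mem_sigma, Finset.mem_filter, Finset.mem_powerset] at hp ⊢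
        refine ⟨⟨Finset.union_subset hp.1.1 (hp.2.trans Finset.sdiff_subset), ?_⟩,
          Finset.subset_union_left, hp.1.2⟩
        intro h
        exact hp.1.2 (Finset.union_eq_empty.mp h).1
      · rintro ⟨X, Y⟩ hp
        simp only [Finset.mem_sigma, Finset.mem_filter, Finset.mem_powerset] at hp
        have : Y ∪ (X \ Y) = X := Finset.union_sdiff_of_subset hp.2.1
        simp [this]
      · rintro ⟨Y, W⟩ hp
        simp only [Finset.mem_sigma, Finset.mem_filter, Finset.mem_powerset] at hp
        have hd : Disjoint Y W := Finset.disjoint_of_subset_right hp.2 Finset.sdiff_disjoint.symm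
        have : (Y ∪ W) \ Y = W := by
          rw [Finset.union_sdiff_cancel_left hd]
        simp [this]
      · rintro ⟨X, Y⟩ hp
        simp only [Finset.mem_sigma, Finset.mem_filter, Finset.mem_powerset] at hp
        have : (Z \ Y) \ (X \ Y) = Z \ X := by
          ext a
          simp only [Finset.mem_sdiff]
          have := @hp.2.1 a
          have := @hp.1.1 a
          tauto
        simp [this]
    rw [key]
    have key2 : ∀ Y ∈ Z.powerset.filter (fun Y => Y ≠ ∅),
        (-1 : A) * T Y * ∑ W ∈ (Z \ Y).powerset, opSum T W * T ((Z \ Y) \ W)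
        = if Y = Z then -(T Z) else 0 := by
      intro Y hY
      simp only [Finset.mem_filter, Finset.mem_powerset] at hY
      by_cases hYZ : Y = Z
      · subst hYZ
        simp [hT1, opSum_empty]
      · have hne : Z \ Y ≠ ∅ := by
          intro h
          exact hYZ (Finset.Subset.antisymm hY.1 (by
            intro a ha
            by_contra hb
            have : a ∈ Z \ Y := Finset.mem_sdiff.mpr ⟨ha, hb⟩
            simp [h] at this))
        have hss : Z \ Y ⊂ Z := by
          refine Finset.sdiff_ssubset hY.1 ?_  -- maybe wrong name
          exact Finset.nonempty_iff_ne_empty.mpr hY.2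
        rw [ih _ hss hne, mul_zero, if_neg hYZ]
    rw [Finset.sum_congr rfl key2, Finset.sum_ite_eq']
    have : Z ∈ Z.powerset.filter (fun Y => Y ≠ ∅) := by
      simp [hZ]
    simp [this]

end Aux

/-- The antichronological products `T̄`, defined by `T̄(∅) = 1` and
`(−1)^{|X|} T̄(X) = Σ_{r=1}^{|X|} (−1)^r Σ T(X₁)⋯T(X_r)`, the inner sum running over all ordered
partitions of `X` into `r` nonempty pairwise disjoint subsets. -/
def chronoBar {A : Type*} [Ring A] {ι : Type*} [DecidableEq ι]
    (T : Finset ι → A) (X : Finset ι) : A :=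
  (-1 : A) ^ X.card * opSum T X

/-- For every nonempty `Z`, `Σ_{X ⊔ Y = Z} (−1)^{|X|} T(X)·T̄(Y) = 0` and
`Σ_{X ⊔ Y = Z} (−1)^{|X|} T̄(X)·T(Y) = 0`. -/
theorem chrono_antichrono_identities {A : Type*} [Ring A] {ι : Type*} [Fintype ι] [DecidableEq ι]
    (T : Finset ι → A) (hT1 : T ∅ = 1) (Z : Finset ι) (hZ : Z ≠ ∅) :
    (∑ X ∈ Z.powerset, (-1 : A) ^ X.card * (T X * chronoBar T (Z \ X)) = 0) ∧
    (∑ X ∈ Z.powerset, (-1 : A) ^ X.card * (chronoBar T X * T (Z \ X)) = 0) := by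
  constructor
  · have h : ∀ X ∈ Z.powerset, (-1 : A) ^ X.card * (T X * chronoBar T (Z \ X))
        = (-1 : A) ^ Z.card * (T X * opSum T (Z \ X)) := by
      intro X hX
      rw [Finset.mem_powerset] at hX
      rw [chronoBar]
      have hle : X.card ≤ Z.card := Finset.card_le_card hX
      have hcard : X.card + (Z \ X).card = Z.card := by
        rw [Finset.card_sdiff_of_subset hX]; omega
      have hc : Commute ((-1 : A) ^ (Z \ X).card) (T X) :=
        (Commute.neg_one_left (T X)).pow_left _
      calc (-1 : A) ^ X.card * (T X * ((-1 : A) ^ (Z \ X).card * opSum T (Z \ X)))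
          = (-1 : A) ^ X.card * ((-1 : A) ^ (Z \ X).card * (T X * opSum T (Z \ X))) := by
            rw [← mul_assoc (T X), ← hc.eq, mul_assoc]
        _ = (-1 : A) ^ Z.card * (T X * opSum T (Z \ X)) := by
            rw [← mul_assoc, ← pow_add, hcard]
    rw [Finset.sum_congr rfl h, ← Finset.mul_sum, firstId T hT1 Z hZ, mul_zero]
  · have h : ∀ X ∈ Z.powerset, (-1 : A) ^ X.card * (chronoBar T X * T (Z \ X))
        = opSum T X * T (Z \ X) := by
      intro X _
      rw [chronoBar, ← mul_assoc, ← mul_assoc, ← pow_add,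
        Even.neg_one_pow ⟨X.card, rfl⟩, one_mul]
    rw [Finset.sum_congr rfl h, secondId T hT1 Z hZ]
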